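/- Two TRSs R and S that are normalization equivalent modulo B, terminating modulo B, left-reduced, and right-B-reduced are unique up to right-B-equivalent variants: every rule of R has a right-B-equivalent variant in S and vice versa. -/
import Mathlib


/-- First-order terms over a signature `F` with natural-number variables. -/
inductive Tm (F : Type) : Type
  | var : Nat → Tm F
  | fn  : F → List (Tm F) → Tm F

namespace Tm

variable {F : Type}

mutual
def subst (σ : Nat → Tm F) : Tm F → Tm F
  | .var n => σ n
  | .fn f ts => .fn f (substList σ ts)
def substList (σ : Nat → Tm F) : List (Tm F) → List (Tm F)
  | [] => []
  | t :: ts => subst σ t :: substList σ ts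
end

mutual
def varsList : Tm F → List Nat
  | .var n => [n]
  | .fn _ ts => varsListL ts
def varsListL : List (Tm F) → List Nat
  | [] => []
  | t :: ts => varsList t ++ varsListL ts
end

/-- The set of variables of a term. -/
def vars (t : Tm F) : Set Nat := {n | n ∈ varsList t}

/-- A term is linear if no variable occurs more than once. -/
def Linear (t : Tm F) : Prop := (varsList t).Nodup

/-- The subterm at a given position (if the position exists). -/
def subtermAt : Tm F → List Nat → Option (Tm F)
  | t, [] => some t
  | .var _, _ :: _ => none
  | .fn _ ts, i :: p =>
    match ts[i]? with
    | some u => subtermAt u p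
    | none => none
  termination_by t p => p.length

/-- Replacement of the subterm at a given position. -/
def replaceAt : Tm F → List Nat → Tm F → Option (Tm F)
  | _, [], s => some s
  | .var _, _ :: _, _ => none
  | .fn f ts, i :: p, s =>
    match ts[i]? with
    | some u => (replaceAt u p s).map fun u' => .fn f (ts.set i u')
    | none => none
  termination_by t p _ => p.length

end Tm

namespace Tm

variable {F : Type}

mutual
def size : Tm F → Nat
  | .var _ => 1
  | .fn _ ts => 1 + sizeL ts
def sizeL : List (Tm F) → Nat
  | [] => 0
  | t :: ts => size t + sizeL ts
end

theorem size_pos : ∀ t : Tm F, 1 ≤ size t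
  | .var _ => le_refl _
  | .fn _ _ => by simp [size]

theorem substList_eq_map (σ : Nat → Tm F) : ∀ ts : List (Tm F),
    substList σ ts = ts.map (subst σ)
  | [] => rfl
  | t :: ts => by rw [substList, substList_eq_map σ ts, List.map_cons]

mutual
theorem subst_subst (σ τ : Nat → Tm F) : ∀ t : Tm F,
    subst σ (subst τ t) = subst (fun n => subst σ (τ n)) t
  | .var n => rfl
  | .fn f ts => by rw [subst, subst, subst, substList_substList σ τ ts]
theorem substList_substList (σ τ : Nat → Tm F) : ∀ ts : List (Tm F),
    substList σ (substList τ ts) = substList (fun n => subst σ (τ n)) ts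
  | [] => rfl
  | t :: ts => by
      rw [substList, substList, substList, subst_subst σ τ t, substList_substList σ τ ts]
end

mutual
theorem subst_congr {σ τ : Nat → Tm F} : ∀ t : Tm F,
    (∀ n ∈ varsList t, σ n = τ n) → subst σ t = subst τ t
  | .var n, h => h n (by simp [varsList])
  | .fn f ts, h => by rw [subst, subst, substList_congr ts (by simpa [varsList] using h)]
theorem substList_congr {σ τ : Nat → Tm F} : ∀ ts : List (Tm F),
    (∀ n ∈ varsListL ts, σ n = τ n) → substList σ ts = substList τ ts
  | [], _ => rfl
  | t :: ts, h => by
      rw [substList, substList,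
        subst_congr t (fun n hn => h n (by simp [varsListL, hn])),
        substList_congr ts (fun n hn => h n (by simp [varsListL, hn]))]
end

mutual
theorem subst_var : ∀ t : Tm F, subst (fun n => .var n) t = t
  | .var n => rfl
  | .fn f ts => by rw [subst, substList_var ts]
theorem substList_var : ∀ ts : List (Tm F), substList (fun n => .var n) ts = ts
  | [] => rfl
  | t :: ts => by rw [substList, subst_var t, substList_var ts]
end

mutual
theorem subst_fixed {σ : Nat → Tm F} : ∀ t : Tm F, subst σ t = t →
    ∀ n ∈ varsList t, σ n = .var n
  | .var m, h, n, hn => by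
      simp [varsList] at hn; subst hn; exact h
  | .fn f ts, h, n, hn => by
      rw [subst] at h
      exact substList_fixed ts (by injection h) n (by simpa [varsList] using hn)
theorem substList_fixed {σ : Nat → Tm F} : ∀ ts : List (Tm F), substList σ ts = ts →
    ∀ n ∈ varsListL ts, σ n = .var n
  | [], _, n, hn => by simp [varsListL] at hn
  | t :: ts, h, n, hn => by
      rw [substList] at h
      injection h with h1 h2
      rcases (by simpa [varsListL] using hn : n ∈ varsList t ∨ n ∈ varsListL ts) with h' | h'
      · exact subst_fixed t h1 n h'
      · exact substList_fixed ts h2 n h'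
end

mutual
theorem mem_varsList_subst {σ : Nat → Tm F} : ∀ t : Tm F, ∀ n ∈ varsList (subst σ t),
    ∃ m ∈ varsList t, n ∈ varsList (σ m)
  | .var m, n, hn => ⟨m, by simp [varsList], by simpa [subst] using hn⟩
  | .fn f ts, n, hn => by
      rw [subst] at hn
      obtain ⟨m, hm, h⟩ := mem_varsListL_substList ts n (by simpa [varsList] using hn)
      exact ⟨m, by simpa [varsList] using hm, h⟩
theorem mem_varsListL_substList {σ : Nat → Tm F} : ∀ ts : List (Tm F),
    ∀ n ∈ varsListL (substList σ ts), ∃ m ∈ varsListL ts, n ∈ varsList (σ m)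
  | [], n, hn => by simp [substList, varsListL] at hn
  | t :: ts, n, hn => by
      rw [substList] at hn
      rcases (by simpa [varsListL] using hn : n ∈ varsList (subst σ t) ∨ n ∈ varsListL (substList σ ts)) with h | h
      · obtain ⟨m, hm, h'⟩ := mem_varsList_subst t n h
        exact ⟨m, by simp [varsListL, hm], h'⟩
      · obtain ⟨m, hm, h'⟩ := mem_varsListL_substList ts n h
        exact ⟨m, by simp [varsListL, hm], h'⟩
end

mutual
theorem size_le_size_subst (σ : Nat → Tm F) : ∀ t : Tm F, size t ≤ size (subst σ t)
  | .var n => size_pos (σ n)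
  | .fn f ts => by
      rw [subst, size, size]
      exact Nat.add_le_add_left (sizeL_le_sizeL_substList σ ts) 1
theorem sizeL_le_sizeL_substList (σ : Nat → Tm F) : ∀ ts : List (Tm F),
    sizeL ts ≤ sizeL (substList σ ts)
  | [] => le_refl _
  | t :: ts => by
      rw [substList, sizeL, sizeL]
      exact Nat.add_le_add (size_le_size_subst σ t) (sizeL_le_sizeL_substList σ ts)
end

theorem subst_eq_var {σ : Nat → Tm F} {t : Tm F} {x : Nat} (h : subst σ t = .var x) :
    ∃ y, t = .var y ∧ σ y = .var x := by
  cases t with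
  | var y => exact ⟨y, rfl, h⟩
  | fn f ts => rw [subst] at h; cases h

theorem size_getElem : ∀ (ts : List (Tm F)) (i : Nat) (u : Tm F), ts[i]? = some u →
    size u ≤ sizeL ts
  | [], i, u, h => by simp at h
  | t :: ts, 0, u, h => by
      simp at h; subst h; exact Nat.le_add_right _ _
  | t :: ts, i + 1, u, h => by
      have := size_getElem ts i u (by simpa using h)
      simp [sizeL]; omega

theorem size_subtermAt_le : ∀ (p : List Nat) (t v : Tm F), subtermAt t p = some v →
    size v ≤ size t
  | [], t, v, h => by
      rw [subtermAt] at h; injection h with h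
      exact Nat.le_of_eq (congrArg size h.symm)
  | i :: p, .var n, v, h => by rw [subtermAt] at h; cases h
  | i :: p, .fn f ts, v, h => by
      rw [subtermAt] at h
      cases hts : ts[i]? with
      | none => rw [hts] at h; cases h
      | some u =>
        rw [hts] at h
        calc size v ≤ size u := size_subtermAt_le p u v h
          _ ≤ sizeL ts := size_getElem ts i u hts
          _ ≤ size (.fn f ts : Tm F) := by rw [size]; omega

theorem size_subtermAt_lt : ∀ (i : Nat) (p : List Nat) (t v : Tm F),
    subtermAt t (i :: p) = some v → size v < size t
  | i, p, .var n, v, h => by rw [subtermAt] at h; cases h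
  | i, p, .fn f ts, v, h => by
      rw [subtermAt] at h
      cases hts : ts[i]? with
      | none => rw [hts] at h; cases h
      | some u =>
        rw [hts] at h
        calc size v ≤ size u := size_subtermAt_le p u v h
          _ ≤ sizeL ts := size_getElem ts i u hts
          _ < size (.fn f ts : Tm F) := by rw [size]; omega

theorem subtermAt_append : ∀ (p q : List Nat) (t v : Tm F), subtermAt t p = some v →
    subtermAt t (p ++ q) = subtermAt v q
  | [], q, t, v, h => by rw [subtermAt] at h; injection h with h; subst h; rfl
  | i :: p, q, .var n, v, h => by rw [subtermAt] at h; cases h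
  | i :: p, q, .fn f ts, v, h => by
      rw [subtermAt] at h
      cases hts : ts[i]? with
      | none => rw [hts] at h; cases h
      | some u =>
        rw [hts] at h
        show subtermAt (.fn f ts) (i :: (p ++ q)) = _
        rw [subtermAt, hts]
        exact subtermAt_append p q u v h

theorem subtermAt_subst (σ : Nat → Tm F) : ∀ (p : List Nat) (t v : Tm F),
    subtermAt t p = some v → subtermAt (subst σ t) p = some (subst σ v)
  | [], t, v, h => by
      rw [subtermAt] at h; injection h with h; subst h; rw [subtermAt]
  | i :: p, .var n, v, h => by rw [subtermAt] at h; cases h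
  | i :: p, .fn f ts, v, h => by
      rw [subtermAt] at h
      cases hts : ts[i]? with
      | none => rw [hts] at h; cases h
      | some u =>
        rw [hts] at h
        rw [subst, subtermAt, substList_eq_map, List.getElem?_map, hts, Option.map_some]
        exact subtermAt_subst σ p u v h

theorem replaceAt_some : ∀ (p : List Nat) (t v x : Tm F), subtermAt t p = some v →
    ∃ u, replaceAt t p x = some u
  | [], t, v, x, h => ⟨x, by rw [replaceAt]⟩
  | i :: p, .var n, v, x, h => by rw [subtermAt] at h; cases h
  | i :: p, .fn f ts, v, x, h => by
      rw [subtermAt] at h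
      cases hts : ts[i]? with
      | none => rw [hts] at h; cases h
      | some u =>
        rw [hts] at h
        obtain ⟨w, hw⟩ := replaceAt_some p u v x h
        refine ⟨.fn f (ts.set i w), ?_⟩
        rw [replaceAt, hts]
        show Option.map (fun u' => Tm.fn f (ts.set i u')) (replaceAt u p x) = _
        rw [hw]; rfl

theorem replaceAt_subst (σ : Nat → Tm F) : ∀ (p : List Nat) (t x u : Tm F),
    replaceAt t p x = some u → replaceAt (subst σ t) p (subst σ x) = some (subst σ u)
  | [], t, x, u, h => by
      rw [replaceAt] at h; injection h with h; subst h; rw [replaceAt]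
  | i :: p, .var n, x, u, h => by rw [replaceAt] at h; cases h
  | i :: p, .fn f ts, x, u, h => by
      rw [replaceAt] at h
      cases hts : ts[i]? with
      | none => rw [hts] at h; cases h
      | some w =>
        rw [hts] at h
        change Option.map (fun u' => Tm.fn f (ts.set i u')) (replaceAt w p x) = some u at h
        cases hrw : replaceAt w p x with
        | none => rw [hrw] at h; cases h
        | some w' =>
          rw [hrw] at h
          injection h with h
          subst h
          rw [subst, replaceAt, substList_eq_map, List.getElem?_map, hts, Option.map_some]
          show Option.map (fun u' => Tm.fn f ((ts.map (subst σ)).set i u'))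
            (replaceAt (subst σ w) p (subst σ x)) = _
          rw [replaceAt_subst σ p w x w' hrw]
          simp [subst, substList_eq_map, List.map_set]

end Tm


open Tm

/-- A term rewrite system (or equational system): a set of pairs of terms. -/
abbrev TRS (F : Type) := Set (Tm F × Tm F)

/-- Well-formedness of the rules: left-hand sides are not variables and
variables of right-hand sides occur on the left. -/
def IsTRS {F : Type} (R : TRS F) : Prop :=
  ∀ p ∈ R, (∀ n, p.1 ≠ .var n) ∧ vars p.2 ⊆ vars p.1

def LeftLinear {F : Type} (R : TRS F) : Prop := ∀ p ∈ R, Linear p.1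

/-- One-step rewrite relation of a set of rules (closed under contexts and
substitutions). -/
def Rew {F : Type} (R : TRS F) (s t : Tm F) : Prop :=
  ∃ p l r σ, (l, r) ∈ R ∧ subtermAt s p = some (subst σ l) ∧
    replaceAt s p (subst σ r) = some t

/-- Normal forms. -/
def NF {A : Type} (r : A → A → Prop) (a : A) : Prop := ∀ b, ¬ r a b

/-- The equational theory `∼B` generated by an ES `B`. -/
def simE {F : Type} (B : TRS F) : Tm F → Tm F → Prop :=
  Relation.EqvGen (Rew B)

/-- Rewriting modulo: `∼B · →R · ∼B`. -/
def RewMod {F : Type} (R B : TRS F) (s t : Tm F) : Prop :=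
  ∃ s' t', simE B s s' ∧ Rew R s' t' ∧ simE B t' t

def Terminating {F : Type} (R : TRS F) : Prop :=
  WellFounded (fun a b => Rew R b a)

def TerminatingMod {F : Type} (R B : TRS F) : Prop :=
  WellFounded (fun a b => RewMod R B b a)

/-- Conversion modulo `B`: arbitrary sequences of `→R`, `←R` and `∼B` steps. -/
def ConvMod {F : Type} (R B : TRS F) : Tm F → Tm F → Prop :=
  Relation.ReflTransGen (fun a b => Rew R a b ∨ Rew R b a ∨ simE B a b)

/-- Joinability modulo `B` using the plain rewrite relation:
`→R* · ∼B · ←R*`. -/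
def JoinMod {F : Type} (R B : TRS F) (s t : Tm F) : Prop :=
  ∃ u v, Relation.ReflTransGen (Rew R) s u ∧ simE B u v ∧
    Relation.ReflTransGen (Rew R) t v

def ChurchRosserMod {F : Type} (R B : TRS F) : Prop :=
  ∀ s t, ConvMod R B s t → JoinMod R B s t

def Joinable {F : Type} (R : TRS F) (s t : Tm F) : Prop :=
  ∃ v, Relation.ReflTransGen (Rew R) s v ∧ Relation.ReflTransGen (Rew R) t v

def Confluent {F : Type} (R : TRS F) : Prop :=
  ∀ s t u, Relation.ReflTransGen (Rew R) s t → Relation.ReflTransGen (Rew R) s u →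
    Joinable R t u

/-- Renaming a term by a bijection on variables. -/
def rename {F : Type} (ρ : Nat ≃ Nat) (t : Tm F) : Tm F :=
  subst (fun n => .var (ρ n)) t

def VariantTm {F : Type} (s t : Tm F) : Prop := ∃ ρ : Nat ≃ Nat, rename ρ s = t

def VariantRule {F : Type} (p q : Tm F × Tm F) : Prop :=
  ∃ ρ : Nat ≃ Nat, rename ρ p.1 = q.1 ∧ rename ρ p.2 = q.2

def Unifies {F : Type} (σ : Nat → Tm F) (s t : Tm F) : Prop := subst σ s = subst σ t

/-- Most general unifier. -/
def IsMGU {F : Type} (σ : Nat → Tm F) (s t : Tm F) : Prop :=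
  Unifies σ s t ∧ ∀ τ, Unifies τ s t → ∃ δ, ∀ n, τ n = subst δ (σ n)

/-- `CriticalPeak R₁ R₂ t p s u` : `t ←R₁[p] s →R₂[ε] u` is a critical peak
obtained from an overlap of variable-disjoint variants of rules of `R₁`
(inner rule) and `R₂` (root rule). -/
def CriticalPeak {F : Type} (R₁ R₂ : TRS F) (t : Tm F) (p : List Nat) (s u : Tm F) :
    Prop :=
  ∃ l₁ r₁ l₂ r₂ σ,
    (∃ q ∈ R₁, VariantRule q (l₁, r₁)) ∧
    (∃ q ∈ R₂, VariantRule q (l₂, r₂)) ∧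
    (vars l₁ ∪ vars r₁) ∩ (vars l₂ ∪ vars r₂) = ∅ ∧
    (∃ f ts, subtermAt l₂ p = some (.fn f ts) ∧ IsMGU σ l₁ (.fn f ts)) ∧
    (p = [] → ¬ VariantRule (l₁, r₁) (l₂, r₂)) ∧
    s = subst σ l₂ ∧
    replaceAt s p (subst σ r₁) = some t ∧
    u = subst σ r₂

/-- The set of critical pairs between `R₁` and `R₂`. -/
def CP {F : Type} (R₁ R₂ : TRS F) : Set (Tm F × Tm F) :=
  {tu | ∃ p s, CriticalPeak R₁ R₂ tu.1 p s tu.2}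

/-- A critical peak `t ←[p] s →[ε] u` is prime (w.r.t. `R`) if all proper
subterms of `s|p` are in normal form w.r.t. `→R`. -/
def PrimeAt {F : Type} (R : TRS F) (s : Tm F) (p : List Nat) : Prop :=
  ∀ q v, q ≠ [] → subtermAt s (p ++ q) = some v → NF (Rew R) v

/-- Prime critical pairs of a TRS. -/
def PCP {F : Type} (R : TRS F) : Set (Tm F × Tm F) :=
  {tu | ∃ p s, CriticalPeak R R tu.1 p s tu.2 ∧ PrimeAt R s p}

/-- `E ∪ E⁻¹`. -/
def sympm {F : Type} (E : TRS F) : TRS F :=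
  E ∪ {q | ∃ p ∈ E, q = (p.2, p.1)}

/-- Prime critical pairs between `R` and `B^±` (in both directions), where
primality is always checked with respect to `→R`. -/
def PCPpm {F : Type} (R B : TRS F) : Set (Tm F × Tm F) :=
  {tu | ∃ p s, (CriticalPeak R (sympm B) tu.1 p s tu.2 ∨
                CriticalPeak (sympm B) R tu.1 p s tu.2) ∧ PrimeAt R s p}

/-- `s` encompasses `t`: some subterm of `s` is an instance of `t`. -/
def Encompass {F : Type} (s t : Tm F) : Prop :=
  ∃ p w σ, subtermAt s p = some w ∧ w = subst σ t

/-- The strict part of encompassment: `⊳ = ⊵ ∖ ≐`. -/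
def StrictEnc {F : Type} (s t : Tm F) : Prop :=
  Encompass s t ∧ ¬ VariantTm s t

/-- Two rules are right-`B`-equivalent variants. -/
def REV {F : Type} (B : TRS F) (p q : Tm F × Tm F) : Prop :=
  ∃ ρ : Nat ≃ Nat, rename ρ p.1 = q.1 ∧ simE B (rename ρ p.2) q.2

/-- Left-reducedness: left-hand sides are irreducible by the other rules. -/
def LeftReduced {F : Type} (R : TRS F) : Prop :=
  ∀ p ∈ R, NF (Rew (R \ {p})) p.1

/-- Right-`B`-reducedness: right-hand sides are `→R/B`-normal forms. -/
def RightBReduced {F : Type} (R B : TRS F) : Prop :=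
  ∀ p ∈ R, NF (RewMod R B) p.2

def CompleteMod {F : Type} (R B : TRS F) : Prop :=
  TerminatingMod R B ∧ ChurchRosserMod R B

def CanonicalMod {F : Type} (R B : TRS F) : Prop :=
  CompleteMod R B ∧ LeftReduced R ∧ RightBReduced R B

/-- Normalization equivalence modulo `B`: `→R^! · ∼B = →S^! · ∼B`. -/
def NormEquivMod {F : Type} (R S B : TRS F) : Prop :=
  ∀ s t, (∃ u, Relation.ReflTransGen (Rew R) s u ∧ NF (Rew R) u ∧ simE B u t) ↔
         (∃ u, Relation.ReflTransGen (Rew S) s u ∧ NF (Rew S) u ∧ simE B u t)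

/-- Conversion equivalence modulo `B`: `↔*_{R∪B} = ↔*_{S∪B}`. -/
def ConvEquivMod {F : Type} (R S B : TRS F) : Prop :=
  ∀ s t, Relation.EqvGen (fun a b => Rew R a b ∨ Rew B a b) s t ↔
         Relation.EqvGen (fun a b => Rew S a b ∨ Rew B a b) s t

section Aux

open Tm

variable {F : Type}

theorem Rew_subst {R : TRS F} {s t : Tm F} (τ : Nat → Tm F) (h : Rew R s t) :
    Rew R (subst τ s) (subst τ t) := by
  obtain ⟨p, l, r, σ, hm, h1, h2⟩ := h
  refine ⟨p, l, r, fun n => subst τ (σ n), hm, ?_, ?_⟩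
  · rw [← subst_subst]; exact subtermAt_subst τ p s _ h1
  · rw [← subst_subst]; exact replaceAt_subst τ p s _ t h2

theorem simE_subst {B : TRS F} {s t : Tm F} (τ : Nat → Tm F) (h : simE B s t) :
    simE B (subst τ s) (subst τ t) := by
  induction h with
  | rel a b hab => exact Relation.EqvGen.rel _ _ (Rew_subst τ hab)
  | refl a => exact Relation.EqvGen.refl _
  | symm a b _ ih => exact Relation.EqvGen.symm _ _ ih
  | trans a b c _ _ ih1 ih2 => exact Relation.EqvGen.trans _ _ _ ih1 ih2

theorem rename_symm_rename (ρ : Nat ≃ Nat) (t : Tm F) : rename ρ.symm (rename ρ t) = t := by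
  rw [rename, rename, subst_subst]
  have h : (fun n => subst (fun m => (Tm.var (ρ.symm m) : Tm F)) (.var (ρ n))) =
      fun n => (Tm.var n : Tm F) := by
    funext n; show (Tm.var (ρ.symm (ρ n)) : Tm F) = _; rw [Equiv.symm_apply_apply]
  rw [h, subst_var]

theorem rename_rename_symm (ρ : Nat ≃ Nat) (t : Tm F) : rename ρ (rename ρ.symm t) = t := by
  have h := rename_symm_rename ρ.symm t
  rwa [Equiv.symm_symm] at h

theorem NF_rename {R : TRS F} {t : Tm F} (ρ : Nat ≃ Nat) (h : NF (Rew R) t) :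
    NF (Rew R) (rename ρ t) := by
  intro u hu
  have h2 := Rew_subst (fun n => (Tm.var (ρ.symm n) : Tm F)) hu
  rw [show subst (fun n => (Tm.var (ρ.symm n) : Tm F)) (rename ρ t) = t from
    rename_symm_rename ρ t] at h2
  exact h _ h2

theorem Rew_root {R : TRS F} {l r : Tm F} (h : (l, r) ∈ R) : Rew R l r :=
  ⟨[], l, r, fun n => .var n, h, by rw [subst_var, subtermAt], by rw [subst_var, replaceAt]⟩

theorem NF_of_NF_RewMod {R B : TRS F} {t : Tm F} (h : NF (RewMod R B) t) :
    NF (Rew R) t :=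
  fun u hu => h u ⟨t, u, Relation.EqvGen.refl _, hu, Relation.EqvGen.refl _⟩

theorem extend_perm (A : Finset Nat) (f : Nat → Nat)
    (hinj : ∀ x ∈ A, ∀ y ∈ A, f x = f y → x = y) :
    ∃ ρ : Nat ≃ Nat, ∀ x ∈ A, ρ x = f x := by
  classical
  induction A using Finset.induction with
  | empty => exact ⟨Equiv.refl _, by simp⟩
  | @insert a A ha ih =>
    obtain ⟨ρ', hρ'⟩ := ih (fun x hx y hy => hinj x (Finset.mem_insert_of_mem hx) y
      (Finset.mem_insert_of_mem hy))
    refine ⟨ρ'.trans (Equiv.swap (ρ' a) (f a)), ?_⟩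
    intro x hx
    rcases Finset.mem_insert.1 hx with rfl | hx
    · exact Equiv.swap_apply_left _ _
    · show Equiv.swap (ρ' a) (f a) (ρ' x) = f x
      rw [Equiv.swap_apply_of_ne_of_ne, hρ' x hx]
      · exact fun h => ha (by rwa [ρ'.injective h] at hx)
      · rw [hρ' x hx]
        exact fun h => ha (by rwa [hinj x (Finset.mem_insert_of_mem hx) a
          (Finset.mem_insert_self a A) h] at hx)

/-- The main one-directional lemma. -/
theorem key_lemma (R S B : TRS F) (hS : IsTRS S)
    (hne : NormEquivMod R S B) (hlR : LeftReduced R)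
    (hrR : RightBReduced R B) (hrS : RightBReduced S B) :
    ∀ p ∈ R, ∃ q ∈ S, REV B p q := by
  classical
  rintro ⟨l, r⟩ hlr
  have hrNF : NF (Rew R) r := NF_of_NF_RewMod (hrR _ hlr)
  -- l →S! u ∼B r
  obtain ⟨u, hSu, hNFu, hur⟩ := (hne l r).1
    ⟨r, Relation.ReflTransGen.single (Rew_root hlr), hrNF, Relation.EqvGen.refl _⟩
  rcases Relation.ReflTransGen.cases_head hSu with rfl | ⟨t₀, hstep, hrest⟩
  · -- l is an S-normal form: contradiction with right-B-reducedness of R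
    exact absurd (⟨l, r, Relation.EqvGen.symm _ _ hur, Rew_root hlr,
      Relation.EqvGen.refl _⟩ : RewMod R B r r) (hrR _ hlr r)
  obtain ⟨p, l₂, r₂, σ, hmem, hsub, hrep⟩ := hstep
  -- l₂ is R-reducible
  have hr₂NF : NF (Rew S) r₂ := NF_of_NF_RewMod (hrS _ hmem)
  obtain ⟨w, hRw, hNFw, hwr₂⟩ := (hne l₂ r₂).2
    ⟨r₂, Relation.ReflTransGen.single (Rew_root hmem), hr₂NF, Relation.EqvGen.refl _⟩
  rcases Relation.ReflTransGen.cases_head hRw with rfl | ⟨w₀, hstep₁, _⟩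
  · exact absurd (⟨l₂, r₂, Relation.EqvGen.symm _ _ hwr₂, Rew_root hmem,
      Relation.EqvGen.refl _⟩ : RewMod S B r₂ r₂) (hrS _ hmem r₂)
  obtain ⟨q, l₁, r₁, σ₁, hmem₁, hsub₁, _⟩ := hstep₁
  -- compose: l rewrites with rule (l₁, r₁) at position p ++ q
  have hsub₂ : subtermAt l (p ++ q) = some (subst (fun n => subst σ (σ₁ n)) l₁) := by
    rw [subtermAt_append p q l _ hsub, ← subst_subst]
    exact subtermAt_subst σ q l₂ _ hsub₁
  have heq : (l₁, r₁) = (l, r) := by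
    by_contra hne'
    obtain ⟨t', hrep'⟩ := replaceAt_some (p ++ q) l _
      (subst (fun n => subst σ (σ₁ n)) r₁) hsub₂
    exact hlR _ hlr t' ⟨p ++ q, l₁, r₁, fun n => subst σ (σ₁ n),
      ⟨hmem₁, fun h => hne' (by simpa using h)⟩, hsub₂, hrep'⟩
  rw [Prod.mk.injEq] at heq
  obtain ⟨hl₁, hr₁⟩ := heq
  subst hl₁; subst hr₁
  -- p ++ q = []
  have hpq : p ++ q = [] := by
    cases hcase : p ++ q with
    | nil => rfl
    | cons i p' =>
      rw [hcase] at hsub₂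
      have h1 := size_subtermAt_lt i p' l₁ _ hsub₂
      have h2 := size_le_size_subst (fun n => subst σ (σ₁ n)) l₁
      omega
  obtain ⟨hp, hq⟩ := List.append_eq_nil_iff.mp hpq
  subst hp; subst hq
  have hl : l₁ = subst σ l₂ := by
    rw [subtermAt] at hsub; exact Option.some.inj hsub
  have hl₂ : l₂ = subst σ₁ l₁ := by
    rw [subtermAt] at hsub₁; exact Option.some.inj hsub₁
  have ht₀ : t₀ = subst σ r₂ := by
    rw [replaceAt] at hrep; exact (Option.some.inj hrep).symm
  -- build the renaming
  have hfix : subst (fun n => subst σ (σ₁ n)) l₁ = l₁ := by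
    rw [← subst_subst, ← hl₂, ← hl]
  have hxy : ∀ x ∈ varsList l₁, ∃ y, σ₁ x = .var y ∧ σ y = .var x :=
    fun x hx => subst_eq_var (subst_fixed l₁ hfix x hx)
  choose g hg1 hg2 using hxy
  set f : Nat → Nat := fun x => if h : x ∈ varsList l₁ then g x h else x with hf
  have hinj : ∀ x ∈ (varsList l₁).toFinset, ∀ y ∈ (varsList l₁).toFinset,
      f x = f y → x = y := by
    intro x hx y hy hfeq
    rw [List.mem_toFinset] at hx hy
    rw [hf] at hfeq
    simp only [hx, hy, dif_pos] at hfeq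
    have := hg2 x hx
    rw [hfeq, hg2 y hy] at this
    injection this with h'
    exact h'.symm
  obtain ⟨ρ, hρ⟩ := extend_perm (varsList l₁).toFinset f hinj
  have hρ' : ∀ x ∈ varsList l₁, σ₁ x = .var (ρ x) ∧ σ (ρ x) = .var x := by
    intro x hx
    have h1 := hρ x (List.mem_toFinset.mpr hx)
    rw [hf] at h1; simp only [hx, dif_pos] at h1
    exact ⟨by rw [h1]; exact hg1 x hx, by rw [h1]; exact hg2 x hx⟩
  have hrename : rename ρ l₁ = l₂ := by
    rw [rename, subst_congr l₁ (fun n hn => ((hρ' n hn).1).symm), ← hl₂]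
  have hσ : ∀ x ∈ varsList l₂, σ x = .var (ρ.symm x) := by
    intro x hx
    rw [hl₂] at hx
    obtain ⟨m, hm, hxm⟩ := mem_varsList_subst l₁ x hx
    rw [(hρ' m hm).1] at hxm
    simp [varsList] at hxm
    subst hxm
    rw [(hρ' m hm).2, Equiv.symm_apply_apply]
  have hr₂l₂ : ∀ n ∈ varsList r₂, n ∈ varsList l₂ := fun n hn => (hS _ hmem).2 hn
  have ht₀' : t₀ = rename ρ.symm r₂ := by
    rw [ht₀, rename, subst_congr r₂ (fun n hn => hσ n (hr₂l₂ n hn))]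
  -- u = t₀
  have hNFt₀ : NF (Rew S) t₀ := by rw [ht₀']; exact NF_rename ρ.symm hr₂NF
  have hu : u = t₀ := by
    rcases Relation.ReflTransGen.cases_head hrest with h | ⟨c, hc, _⟩
    · exact h.symm
    · exact absurd hc (hNFt₀ c)
  refine ⟨(l₂, r₂), hmem, ρ, hrename, ?_⟩
  have hsim : simE B (rename ρ t₀) (rename ρ r₁) := simE_subst _ (hu ▸ hur)
  rw [ht₀', rename_rename_symm] at hsim
  exact Relation.EqvGen.symm _ _ hsim

end Aux


/-- TRSs which are normalization equivalent modulo `B`, terminating modulo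
`B`, left-reduced and right-`B`-reduced are unique up to
right-`B`-equivalent variants. -/
theorem stmt10 {F : Type} (R S B : TRS F) (hR : IsTRS R) (hS : IsTRS S)
    (hne : NormEquivMod R S B)
    (htR : TerminatingMod R B) (htS : TerminatingMod S B)
    (hlR : LeftReduced R) (hlS : LeftReduced S)
    (hrR : RightBReduced R B) (hrS : RightBReduced S B) :
    (∀ p ∈ R, ∃ q ∈ S, REV B p q) ∧ (∀ q ∈ S, ∃ p ∈ R, REV B q p) :=
  ⟨key_lemma R S B hS hne hlR hrR hrS,
   key_lemma S R B hR (fun s t => (hne s t).symm) hlS hrS hrR⟩
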